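/- With P_z(λ) as defined, if λ_k = λ_l then (e^z_{k,l})² P_z(λ) = 0, where e^z_{k,l} = ∑_a z_a y_a^{(k)} ∂/∂y_a^{(l)}. -/

import Mathlib

open MvPolynomial Finset

noncomputable section
namespace EzklAux

lemma coeff_lagrange_basis {ι : Type*} [DecidableEq ι] (s : Finset ι) (v : ι → ℂ)
    {i : ι} (hi : i ∈ s) :
    (Lagrange.basis s v i).coeff (s.card - 1) = Lagrange.nodalWeight s v i := by
  have h1 : Lagrange.basis s v i =
      Polynomial.C (Lagrange.nodalWeight s v i) * Lagrange.nodal (s.erase i) v := by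
    rw [Lagrange.basis_eq_prod_sub_inv_mul_nodal_div hi, Lagrange.nodal_erase_eq_nodal_div hi]
  have h2 : (Lagrange.nodal (s.erase i) v).natDegree = s.card - 1 := by
    rw [Lagrange.natDegree_nodal, card_erase_of_mem hi]
  rw [h1, Polynomial.coeff_C_mul, ← h2, (Lagrange.nodal_monic).coeff_natDegree, mul_one]

lemma lagrange_key {ι : Type*} [DecidableEq ι] (s : Finset ι) (v : ι → ℂ)
    (hvs : Set.InjOn v s) (F : Polynomial ℂ) (hdeg : F.degree < ((s.card - 1 : ℕ) : WithBot ℕ)) :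
    ∑ i ∈ s, F.eval (v i) * Lagrange.nodalWeight s v i = 0 := by
  have hds : F.degree < (s.card : WithBot ℕ) := by
    refine lt_of_lt_of_le hdeg ?_
    exact WithBot.coe_le_coe.mpr (Nat.sub_le _ _)
  have hF : F = Lagrange.interpolate s v (fun i => F.eval (v i)) :=
    Lagrange.eq_interpolate hvs hds
  have h := congrArg (fun p : Polynomial ℂ => p.coeff (s.card - 1)) hF
  simp only [Lagrange.interpolate_apply, Polynomial.finset_sum_coeff,
    Polynomial.coeff_C_mul] at h
  rw [Polynomial.coeff_eq_zero_of_degree_lt hdeg] at h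
  have h2 : ∑ x ∈ s, F.eval (v x) * (Lagrange.basis s v x).coeff (s.card - 1)
      = ∑ i ∈ s, F.eval (v i) * Lagrange.nodalWeight s v i :=
    Finset.sum_congr rfl fun i hi => by rw [coeff_lagrange_basis s v hi]
  rw [← h2, ← h]

lemma sum_pairs_eq_zero {N : ℕ} (K L : Finset (Fin N)) (z : Fin N → ℂ)
    (hz : Function.Injective z) (hcard : K.card = L.card + 4) :
    ∑ a ∈ K, ∑ b ∈ K.erase a,
      z a * z b * ((z a - z b)^2 * ((∏ y ∈ L, (z a - z y)) * (∏ y ∈ L, (z b - z y)) *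
        (Lagrange.nodalWeight K z a * Lagrange.nodalWeight K z b))) = 0 := by
  set w := Lagrange.nodalWeight K z with hw
  set φ : ℕ → Fin N → ℂ := fun j x => (z x)^j * (∏ y ∈ L, (z x - z y)) * w x with hφ
  have hA : ∀ j : ℕ, j ≤ 2 → ∑ a ∈ K, φ j a = 0 := by
    intro j hj
    have := lagrange_key K z hz.injOn (Polynomial.X ^ j * Lagrange.nodal L z) ?_
    · rw [← this]
      refine Finset.sum_congr rfl fun a _ => ?_
      simp [φ, w, Lagrange.eval_nodal, mul_assoc]
    · rw [Polynomial.degree_mul, Polynomial.degree_X_pow, Lagrange.degree_nodal, hcard]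
      have h3 : (j : WithBot ℕ) + L.card = ((j + L.card : ℕ) : WithBot ℕ) := by push_cast; ring
      rw [h3]
      rw [Nat.cast_withBot, Nat.cast_withBot, WithBot.coe_lt_coe]; omega
  have key : ∀ a b : Fin N,
      z a * z b * ((z a - z b)^2 * ((∏ y ∈ L, (z a - z y)) * (∏ y ∈ L, (z b - z y)) *
        (w a * w b))) = φ 3 a * φ 1 b + φ 1 a * φ 3 b - 2 * (φ 2 a * φ 2 b) := by
    intro a b; simp only [φ]; ring
  have diag : ∀ a ∈ K, ∑ b ∈ K,
      z a * z b * ((z a - z b)^2 * ((∏ y ∈ L, (z a - z y)) * (∏ y ∈ L, (z b - z y)) *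
        (w a * w b))) = ∑ b ∈ K.erase a,
      z a * z b * ((z a - z b)^2 * ((∏ y ∈ L, (z a - z y)) * (∏ y ∈ L, (z b - z y)) *
        (w a * w b))) := by
    intro a ha
    rw [← Finset.add_sum_erase _ _ ha]
    simp
  calc ∑ a ∈ K, ∑ b ∈ K.erase a,
      z a * z b * ((z a - z b)^2 * ((∏ y ∈ L, (z a - z y)) * (∏ y ∈ L, (z b - z y)) *
        (w a * w b)))
      = ∑ a ∈ K, ∑ b ∈ K,
      z a * z b * ((z a - z b)^2 * ((∏ y ∈ L, (z a - z y)) * (∏ y ∈ L, (z b - z y)) *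
        (w a * w b))) := (Finset.sum_congr rfl diag).symm
    _ = ∑ a ∈ K, ∑ b ∈ K, (φ 3 a * φ 1 b + φ 1 a * φ 3 b - 2 * (φ 2 a * φ 2 b)) :=
        Finset.sum_congr rfl fun a _ => Finset.sum_congr rfl fun b _ => key a b
    _ = (∑ a ∈ K, φ 3 a) * (∑ b ∈ K, φ 1 b) + (∑ a ∈ K, φ 1 a) * (∑ b ∈ K, φ 3 b)
        - 2 * ((∑ a ∈ K, φ 2 a) * (∑ b ∈ K, φ 2 b)) := by
        rw [Finset.sum_mul_sum, Finset.sum_mul_sum, Finset.sum_mul_sum]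
        simp only [Finset.sum_add_distrib, Finset.sum_sub_distrib, Finset.mul_sum]
    _ = 0 := by rw [hA 1 (by norm_num), hA 2 (by norm_num)]; ring


lemma split_R {m n : ℕ} (z : Fin n → ℂ) (h : Fin n → Fin m) (a b : Fin n) (hab : a ≠ b)
    (hhab : h a = h b) :
    ∏ x : Fin n, ∏ y ∈ Finset.univ.filter (fun y => h x < h y), (z x - z y)
    = (∏ y ∈ (Finset.univ.erase a).erase b,
        ((if h a < h y then z a - z y else 1) * (if h b < h y then z b - z y else 1)))
      * ∏ x ∈ (Finset.univ.erase a).erase b,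
          ((if h x < h a then z x - z a else 1) * (if h x < h b then z x - z b else 1) *
            ∏ y ∈ (Finset.univ.erase a).erase b, (if h x < h y then z x - z y else 1)) := by
  have hb : b ∈ Finset.univ.erase a := Finset.mem_erase.mpr ⟨hab.symm, Finset.mem_univ b⟩
  have expand : ∀ G : Fin n → ℂ, ∏ x : Fin n, G x
      = G a * (G b * ∏ x ∈ (Finset.univ.erase a).erase b, G x) := by
    intro G
    rw [← Finset.mul_prod_erase Finset.univ G (Finset.mem_univ a),
      ← Finset.mul_prod_erase (Finset.univ.erase a) G hb]
  simp only [Finset.prod_filter]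
  rw [expand]
  rw [expand (fun y => if h a < h y then z a - z y else 1)]
  rw [expand (fun y => if h b < h y then z b - z y else 1)]
  have hrow : ∀ x, ∏ y : Fin n, (if h x < h y then z x - z y else 1)
      = (if h x < h a then z x - z a else 1) * ((if h x < h b then z x - z b else 1) *
          ∏ y ∈ (Finset.univ.erase a).erase b, (if h x < h y then z x - z y else 1)) := by
    intro x
    rw [expand (fun y => if h x < h y then z x - z y else 1)]
  rw [Finset.prod_congr rfl (fun x _ => hrow x)]
  simp only [lt_irrefl, if_neg, hhab, if_false]
  simp only [Finset.prod_mul_distrib]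
  ring

lemma ident {m n : ℕ} (z : Fin n → ℂ)
    (k l : Fin m) (hkl : k ≠ l) (g : Fin n → Fin m) (a b : Fin n) (hab : a ≠ b)
    (hga : g a = k) (hgb : g b = k) :
    (∏ x : Fin n, ∏ y ∈ Finset.univ.filter
        (fun y => Function.update (Function.update g a l) b l x
          < Function.update (Function.update g a l) b l y), (z x - z y))
      * ((z a - z b)^2 *
        ((∏ y ∈ Finset.univ.filter (fun y => g y = l), (z a - z y)) *
         (∏ y ∈ Finset.univ.filter (fun y => g y = l), (z b - z y)))) * (-1)
    = (∏ x : Fin n, ∏ y ∈ Finset.univ.filter (fun y => g x < g y), (z x - z y))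
      * ((∏ x ∈ (Finset.univ.filter (fun x => g x = k)).erase a, (z a - z x)) *
         (∏ x ∈ (Finset.univ.filter (fun x => g x = k)).erase b, (z b - z x))) := by
  classical
  have hfa : Function.update (Function.update g a l) b l a = l := by
    simp [Function.update_apply, hab]
  have hfb : Function.update (Function.update g a l) b l b = l := by simp
  have hfx : ∀ x, x ≠ a → x ≠ b → Function.update (Function.update g a l) b l x = g x := by
    intro x hxa hxb
    simp [Function.update_apply, hxa, hxb]
  have hmemU2 : ∀ x : Fin n, x ∈ (Finset.univ.erase a).erase b ↔ x ≠ b ∧ x ≠ a := by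
    intro x; simp [and_comm]
  have hKa : (Finset.univ.filter (fun x => g x = k)).erase a
      = insert b (((Finset.univ.erase a).erase b).filter (fun x => g x = k)) := by
    ext x
    simp only [Finset.mem_erase, Finset.mem_filter, Finset.mem_insert, hmemU2, Finset.mem_univ,
      true_and]
    constructor
    · rintro ⟨hxa, hxk⟩
      by_cases hxb : x = b
      · exact Or.inl hxb
      · exact Or.inr ⟨⟨hxb, hxa⟩, hxk⟩
    · rintro (rfl | ⟨⟨hxb, hxa⟩, hxk⟩)
      · exact ⟨hab.symm, hgb⟩
      · exact ⟨hxa, hxk⟩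
  have hKb : (Finset.univ.filter (fun x => g x = k)).erase b
      = insert a (((Finset.univ.erase a).erase b).filter (fun x => g x = k)) := by
    ext x
    simp only [Finset.mem_erase, Finset.mem_filter, Finset.mem_insert, hmemU2, Finset.mem_univ,
      true_and]
    constructor
    · rintro ⟨hxb, hxk⟩
      by_cases hxa : x = a
      · exact Or.inl hxa
      · exact Or.inr ⟨⟨hxb, hxa⟩, hxk⟩
    · rintro (rfl | ⟨⟨hxb, hxa⟩, hxk⟩)
      · exact ⟨hab, hga⟩
      · exact ⟨hxb, hxk⟩
  have hbnot : b ∉ ((Finset.univ.erase a).erase b).filter (fun x => g x = k) := by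
    simp [hmemU2]
  have hanot : a ∉ ((Finset.univ.erase a).erase b).filter (fun x => g x = k) := by
    simp [hmemU2]
  have hwa : ∏ x ∈ (Finset.univ.filter (fun x => g x = k)).erase a, (z a - z x)
      = (z a - z b) * ∏ x ∈ (Finset.univ.erase a).erase b, (if g x = k then z a - z x else 1) := by
    rw [hKa, Finset.prod_insert hbnot, Finset.prod_filter]
  have hwb : ∏ x ∈ (Finset.univ.filter (fun x => g x = k)).erase b, (z b - z x)
      = (z b - z a) * ∏ x ∈ (Finset.univ.erase a).erase b, (if g x = k then z b - z x else 1) := by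
    rw [hKb, Finset.prod_insert hanot, Finset.prod_filter]
  have hLU : Finset.univ.filter (fun y => g y = l)
      = ((Finset.univ.erase a).erase b).filter (fun y => g y = l) := by
    ext y
    simp only [Finset.mem_filter, Finset.mem_univ, true_and, hmemU2]
    constructor
    · intro hy
      refine ⟨⟨?_, ?_⟩, hy⟩
      · rintro rfl; exact hkl (hgb.symm.trans hy)
      · rintro rfl; exact hkl (hga.symm.trans hy)
    · exact fun hy => hy.2
  have hQa : ∏ y ∈ Finset.univ.filter (fun y => g y = l), (z a - z y)
      = ∏ y ∈ (Finset.univ.erase a).erase b, (if g y = l then z a - z y else 1) := by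
    rw [hLU, Finset.prod_filter]
  have hQb : ∏ y ∈ Finset.univ.filter (fun y => g y = l), (z b - z y)
      = ∏ y ∈ (Finset.univ.erase a).erase b, (if g y = l then z b - z y else 1) := by
    rw [hLU, Finset.prod_filter]
  have hfab : Function.update (Function.update g a l) b l a
      = Function.update (Function.update g a l) b l b := by rw [hfa, hfb]
  have hgab : g a = g b := by rw [hga, hgb]
  have Sf := split_R z (Function.update (Function.update g a l) b l) a b hab hfab
  have Sg := split_R z g a b hab hgab
  have hinner : ∀ x ∈ (Finset.univ.erase a).erase b,
      (if Function.update (Function.update g a l) b l x < Function.update (Function.update g a l) b l a then z x - z a else 1) *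
      (if Function.update (Function.update g a l) b l x < Function.update (Function.update g a l) b l b then z x - z b else 1) *
      (∏ y ∈ (Finset.univ.erase a).erase b,
        (if Function.update (Function.update g a l) b l x < Function.update (Function.update g a l) b l y then z x - z y else 1))
      = (if Function.update (Function.update g a l) b l x < Function.update (Function.update g a l) b l a then z x - z a else 1) *
      (if Function.update (Function.update g a l) b l x < Function.update (Function.update g a l) b l b then z x - z b else 1) *
      (∏ y ∈ (Finset.univ.erase a).erase b, (if g x < g y then z x - z y else 1)) := by
    intro x hx
    obtain ⟨hxb, hxa⟩ := (hmemU2 x).mp hx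
    congr 1
    refine Finset.prod_congr rfl fun y hy => ?_
    obtain ⟨hyb, hya⟩ := (hmemU2 y).mp hy
    rw [hfx x hxa hxb, hfx y hya hyb]
  rw [Sf, Sg, hwa, hwb, hQa, hQb, Finset.prod_congr rfl hinner]
  have MP : ∏ y ∈ (Finset.univ.erase a).erase b,
      ((if Function.update (Function.update g a l) b l a < Function.update (Function.update g a l) b l y then z a - z y else 1) *
       (if Function.update (Function.update g a l) b l b < Function.update (Function.update g a l) b l y then z b - z y else 1) *
       ((if Function.update (Function.update g a l) b l y < Function.update (Function.update g a l) b l a then z y - z a else 1) *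
        (if Function.update (Function.update g a l) b l y < Function.update (Function.update g a l) b l b then z y - z b else 1)) *
       ((if g y = l then z a - z y else 1) * (if g y = l then z b - z y else 1)))
      = ∏ y ∈ (Finset.univ.erase a).erase b,
      ((if g a < g y then z a - z y else 1) * (if g b < g y then z b - z y else 1) *
       ((if g y < g a then z y - z a else 1) * (if g y < g b then z y - z b else 1)) *
       ((if g y = k then z a - z y else 1) * (if g y = k then z b - z y else 1))) := by
    refine Finset.prod_congr rfl fun y hy => ?_
    obtain ⟨hyb, hya⟩ := (hmemU2 y).mp hy
    rw [hfx y hya hyb, hfa, hfb, hga, hgb]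
    have hL : (if l < g y then z a - z y else 1) * (if l < g y then z b - z y else 1) *
        ((if g y < l then z y - z a else 1) * (if g y < l then z y - z b else 1)) *
        ((if g y = l then z a - z y else 1) * (if g y = l then z b - z y else 1))
        = (z a - z y) * (z b - z y) := by
      rcases lt_trichotomy (g y) l with h | h | h
      · rw [if_neg h.not_gt, if_neg h.not_gt, if_pos h, if_pos h, if_neg h.ne, if_neg h.ne]
        ring
      · rw [if_neg (h ▸ lt_irrefl _), if_neg (h ▸ lt_irrefl _), if_neg (h ▸ lt_irrefl _),
          if_neg (h ▸ lt_irrefl _), if_pos h, if_pos h]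
        ring
      · rw [if_pos h, if_pos h, if_neg h.not_gt, if_neg h.not_gt, if_neg h.ne', if_neg h.ne']
        ring
    have hK : (if k < g y then z a - z y else 1) * (if k < g y then z b - z y else 1) *
        ((if g y < k then z y - z a else 1) * (if g y < k then z y - z b else 1)) *
        ((if g y = k then z a - z y else 1) * (if g y = k then z b - z y else 1))
        = (z a - z y) * (z b - z y) := by
      rcases lt_trichotomy (g y) k with h | h | h
      · rw [if_neg h.not_gt, if_neg h.not_gt, if_pos h, if_pos h, if_neg h.ne, if_neg h.ne]
        ring
      · rw [if_neg (h ▸ lt_irrefl _), if_neg (h ▸ lt_irrefl _), if_neg (h ▸ lt_irrefl _),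
          if_neg (h ▸ lt_irrefl _), if_pos h, if_pos h]
        ring
      · rw [if_pos h, if_pos h, if_neg h.not_gt, if_neg h.not_gt, if_neg h.ne', if_neg h.ne']
        ring
    rw [hL, hK]
  simp only [Finset.prod_mul_distrib] at MP ⊢
  linear_combination (-(z a - z b)^2) *
    (∏ x ∈ (Finset.univ.erase a).erase b, ∏ y ∈ (Finset.univ.erase a).erase b,
      (if g x < g y then z x - z y else 1)) * MP


lemma coeff_formula {m n : ℕ} (z : Fin n → ℂ) (hz : Function.Injective z)
    (k l : Fin m) (hkl : k ≠ l) (g : Fin n → Fin m) (a b : Fin n) (hab : a ≠ b)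
    (hga : g a = k) (hgb : g b = k) :
    (∏ x : Fin n, ∏ y ∈ Finset.univ.filter
        (fun y => Function.update (Function.update g a l) b l x
          < Function.update (Function.update g a l) b l y), (z x - z y))⁻¹
    = -(∏ x : Fin n, ∏ y ∈ Finset.univ.filter (fun y => g x < g y), (z x - z y))⁻¹ *
      ((z a - z b)^2 *
        ((∏ y ∈ Finset.univ.filter (fun y => g y = l), (z a - z y)) *
         (∏ y ∈ Finset.univ.filter (fun y => g y = l), (z b - z y)) *
        (Lagrange.nodalWeight (Finset.univ.filter (fun x => g x = k)) z a *
         Lagrange.nodalWeight (Finset.univ.filter (fun x => g x = k)) z b))) := by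
  classical
  have hzne : ∀ x y : Fin n, x ≠ y → z x - z y ≠ 0 := fun x y hxy =>
    sub_ne_zero_of_ne (fun h => hxy (hz h))
  have hRf : (∏ x : Fin n, ∏ y ∈ Finset.univ.filter
      (fun y => Function.update (Function.update g a l) b l x
        < Function.update (Function.update g a l) b l y), (z x - z y)) ≠ 0 := by
    rw [Finset.prod_ne_zero_iff]
    intro x _
    rw [Finset.prod_ne_zero_iff]
    intro y hy
    exact hzne x y (fun h => absurd (h ▸ (Finset.mem_filter.mp hy).2) (lt_irrefl _))
  have hRg : (∏ x : Fin n, ∏ y ∈ Finset.univ.filter (fun y => g x < g y), (z x - z y)) ≠ 0 := by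
    rw [Finset.prod_ne_zero_iff]
    intro x _
    rw [Finset.prod_ne_zero_iff]
    intro y hy
    exact hzne x y (fun h => absurd (h ▸ (Finset.mem_filter.mp hy).2) (lt_irrefl _))
  have hwa : (∏ x ∈ (Finset.univ.filter (fun x => g x = k)).erase a, (z a - z x)) ≠ 0 := by
    rw [Finset.prod_ne_zero_iff]
    intro x hx
    exact hzne a x (Ne.symm (Finset.mem_erase.mp hx).1)
  have hwb : (∏ x ∈ (Finset.univ.filter (fun x => g x = k)).erase b, (z b - z x)) ≠ 0 := by
    rw [Finset.prod_ne_zero_iff]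
    intro x hx
    exact hzne b x (Ne.symm (Finset.mem_erase.mp hx).1)
  have hQa : (∏ y ∈ Finset.univ.filter (fun y => g y = l), (z a - z y)) ≠ 0 := by
    rw [Finset.prod_ne_zero_iff]
    intro y hy
    refine hzne a y fun h => ?_
    subst h
    exact hkl (hga.symm.trans (Finset.mem_filter.mp hy).2)
  have hQb : (∏ y ∈ Finset.univ.filter (fun y => g y = l), (z b - z y)) ≠ 0 := by
    rw [Finset.prod_ne_zero_iff]
    intro y hy
    refine hzne b y fun h => ?_
    subst h
    exact hkl (hgb.symm.trans (Finset.mem_filter.mp hy).2)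
  have hab2 : z a - z b ≠ 0 := hzne a b hab
  have hW : Lagrange.nodalWeight (Finset.univ.filter (fun x => g x = k)) z a
      = (∏ x ∈ (Finset.univ.filter (fun x => g x = k)).erase a, (z a - z x))⁻¹ := by
    rw [Lagrange.nodalWeight, ← Finset.prod_inv_distrib]
  have hW' : Lagrange.nodalWeight (Finset.univ.filter (fun x => g x = k)) z b
      = (∏ x ∈ (Finset.univ.filter (fun x => g x = k)).erase b, (z b - z x))⁻¹ := by
    rw [Lagrange.nodalWeight, ← Finset.prod_inv_distrib]
  rw [hW, hW']
  have H := ident z k l hkl g a b hab hga hgb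
  field_simp
  linear_combination -H


variable {m n : ℕ}

def expo (f : Fin n → Fin m) : (Fin m × Fin n) →₀ ℕ :=
  ∑ a : Fin n, Finsupp.single (f a, a) 1

lemma prod_monomial (s : Finset (Fin n)) (h : Fin n → ((Fin m × Fin n) →₀ ℕ)) :
    ∏ a ∈ s, (monomial (h a) (1 : ℂ) : MvPolynomial (Fin m × Fin n) ℂ)
      = monomial (∑ a ∈ s, h a) 1 := by
  classical
  induction s using Finset.induction_on with
  | empty => simp
  | insert _ _ hx ih =>
      rw [Finset.prod_insert hx, Finset.sum_insert hx, ih, monomial_mul, one_mul]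

lemma prod_X_eq (f : Fin n → Fin m) :
    (∏ a : Fin n, (X (f a, a) : MvPolynomial (Fin m × Fin n) ℂ)) = monomial (expo f) 1 := by
  rw [expo, ← prod_monomial]
  rfl

lemma expo_apply (f : Fin n → Fin m) (j : Fin m) (b : Fin n) :
    expo f (j, b) = if f b = j then 1 else 0 := by
  classical
  rw [expo, Finsupp.finset_sum_apply]
  rw [Finset.sum_eq_single b]
  · rw [Finsupp.single_apply]
    by_cases h : f b = j
    · rw [if_pos (by rw [h]), if_pos h]
    · rw [if_neg (by simp [h]), if_neg h]
  · intro a _ hab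
    rw [Finsupp.single_apply, if_neg (by simp [hab])]
  · intro h; exact absurd (Finset.mem_univ b) h

lemma expo_update (f : Fin n → Fin m) (a : Fin n) (c c0 : Fin m) (h : f a = c0) :
    expo f - Finsupp.single (c0, a) 1 + Finsupp.single (c, a) 1
      = expo (Function.update f a c) := by
  classical
  have h1 : expo f = Finsupp.single (c0, a) 1
      + ∑ x ∈ Finset.univ.erase a, Finsupp.single (f x, x) 1 := by
    rw [expo, ← Finset.add_sum_erase _ _ (Finset.mem_univ a), h]
  have h2 : expo (Function.update f a c) = Finsupp.single (c, a) 1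
      + ∑ x ∈ Finset.univ.erase a, Finsupp.single (f x, x) 1 := by
    rw [expo, ← Finset.add_sum_erase _ _ (Finset.mem_univ a), Function.update_self]
    congr 1
    refine Finset.sum_congr rfl fun x hx => ?_
    rw [Function.update_of_ne (Finset.mem_erase.mp hx).1]
  rw [h1, h2, add_tsub_cancel_left, add_comm]

lemma mul_X_pderiv_monomial (w c : ℂ) (i j : Fin m × Fin n) (s : (Fin m × Fin n) →₀ ℕ) :
    C w * X i * (pderiv j (C c * monomial s 1) : MvPolynomial (Fin m × Fin n) ℂ)
      = monomial (s - Finsupp.single j 1 + Finsupp.single i 1) (c * w * (s j : ℂ)) := by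
  rw [pderiv_C_mul, pderiv_monomial, C_mul_monomial,
    show (X i : MvPolynomial (Fin m × Fin n) ℂ) = monomial (Finsupp.single i 1) 1 from rfl,
    C_mul_monomial, monomial_mul,
    add_comm (Finsupp.single i 1) (s - Finsupp.single j 1)]
  congr 1
  ring

lemma mul_X_pderiv_monomial' (w c : ℂ) (i j : Fin m × Fin n) (s : (Fin m × Fin n) →₀ ℕ) :
    C w * X i * (pderiv j (monomial s c) : MvPolynomial (Fin m × Fin n) ℂ)
      = monomial (s - Finsupp.single j 1 + Finsupp.single i 1) (c * w * (s j : ℂ)) := by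
  rw [show (monomial s c : MvPolynomial (Fin m × Fin n) ℂ) = C c * monomial s 1 by
    rw [C_mul_monomial, mul_one]]
  exact mul_X_pderiv_monomial w c i j s



def cc (z : Fin n → ℂ) (f : Fin n → Fin m) : ℂ :=
  (∏ a : Fin n, ∏ b ∈ Finset.univ.filter (fun b => f a < f b), (z a - z b))⁻¹

open Classical in
def cD (lam : Fin m → ℕ) (z : Fin n → ℂ) (f : Fin n → Fin m) : ℂ :=
  if ∀ j, (Finset.univ.filter fun a => f a = j).card = lam j then cc z f else 0

-- counting lemma
lemma condeq (lam : Fin m → ℕ) (k l : Fin m) (hkl : k ≠ l) (g : Fin n → Fin m)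
    (a b : Fin n) (hga : g a = k) (hgb : g b = k) (hab : a ≠ b) :
    ((∀ j, (Finset.univ.filter
        fun x => Function.update (Function.update g a l) b l x = j).card = lam j) ↔
      ((Finset.univ.filter fun x => g x = k).card = lam k + 2 ∧
       (Finset.univ.filter fun x => g x = l).card + 2 = lam l ∧
       ∀ j, j ≠ k → j ≠ l → (Finset.univ.filter fun x => g x = j).card = lam j)) := by
  classical
  have hfa : Function.update (Function.update g a l) b l a = l := by
    simp [Function.update_apply, hab]
  have hfb : Function.update (Function.update g a l) b l b = l := by simp
  have hfx : ∀ x, x ≠ a → x ≠ b → Function.update (Function.update g a l) b l x = g x := by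
    intro x hxa hxb
    simp [Function.update_apply, hxa, hxb]
  have hamem : a ∈ Finset.univ.filter (fun x => g x = k) := by simp [hga]
  have hbmem : b ∈ (Finset.univ.filter (fun x => g x = k)).erase a := by
    simp [hgb, hab.symm]
  have SETK : Finset.univ.filter
      (fun x => Function.update (Function.update g a l) b l x = k)
      = ((Finset.univ.filter fun x => g x = k).erase a).erase b := by
    ext x
    simp only [Finset.mem_filter, Finset.mem_univ, true_and, Finset.mem_erase]
    constructor
    · intro hx
      have hxb : x ≠ b := by rintro rfl; rw [hfb] at hx; exact hkl hx.symm
      have hxa : x ≠ a := by rintro rfl; rw [hfa] at hx; exact hkl hx.symm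
      exact ⟨hxb, hxa, by rwa [hfx x hxa hxb] at hx⟩
    · rintro ⟨hxb, hxa, hx⟩
      rwa [hfx x hxa hxb]
  have SETL : Finset.univ.filter
      (fun x => Function.update (Function.update g a l) b l x = l)
      = insert a (insert b (Finset.univ.filter fun x => g x = l)) := by
    ext x
    simp only [Finset.mem_filter, Finset.mem_univ, true_and, Finset.mem_insert]
    constructor
    · intro hx
      by_cases hxa : x = a
      · exact Or.inl hxa
      · by_cases hxb : x = b
        · exact Or.inr (Or.inl hxb)
        · exact Or.inr (Or.inr (by rwa [hfx x hxa hxb] at hx))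
    · rintro (rfl | rfl | hx)
      · exact hfa
      · exact hfb
      · have hxa : x ≠ a := by rintro rfl; exact hkl (hga.symm.trans hx)
        have hxb : x ≠ b := by rintro rfl; exact hkl (hgb.symm.trans hx)
        rwa [hfx x hxa hxb]
  have SETJ : ∀ j, j ≠ k → j ≠ l → Finset.univ.filter
      (fun x => Function.update (Function.update g a l) b l x = j)
      = Finset.univ.filter fun x => g x = j := by
    intro j hjk hjl
    ext x
    simp only [Finset.mem_filter, Finset.mem_univ, true_and]
    by_cases hxa : x = a
    · subst hxa
      rw [hfa, hga]
      constructor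
      · intro h; exact absurd h.symm hjl
      · intro h; exact absurd h.symm hjk
    · by_cases hxb : x = b
      · subst hxb
        rw [hfb, hgb]
        constructor
        · intro h; exact absurd h.symm hjl
        · intro h; exact absurd h.symm hjk
      · rw [hfx x hxa hxb]
  have cK : (((Finset.univ.filter fun x => g x = k).erase a).erase b).card
      = (Finset.univ.filter fun x => g x = k).card - 1 - 1 := by
    rw [Finset.card_erase_of_mem hbmem, Finset.card_erase_of_mem hamem]
  have hK2 : 2 ≤ (Finset.univ.filter fun x => g x = k).card := by
    have c1 := Finset.card_erase_of_mem hamem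
    have c2 : 0 < ((Finset.univ.filter fun x => g x = k).erase a).card :=
      Finset.card_pos.mpr ⟨b, hbmem⟩
    omega
  have hbnotin : b ∉ (Finset.univ.filter fun x => g x = l) := by
    simp only [Finset.mem_filter, Finset.mem_univ, true_and]
    rw [hgb]; exact hkl
  have hanotin : a ∉ insert b (Finset.univ.filter fun x => g x = l) := by
    simp only [Finset.mem_insert, Finset.mem_filter, Finset.mem_univ, true_and]
    rintro (rfl | h)
    · exact hab rfl
    · rw [hga] at h; exact hkl h
  have cL : (insert a (insert b (Finset.univ.filter fun x => g x = l))).card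
      = (Finset.univ.filter fun x => g x = l).card + 2 := by
    rw [Finset.card_insert_of_notMem hanotin, Finset.card_insert_of_notMem hbnotin]
  constructor
  · intro h
    refine ⟨?_, ?_, ?_⟩
    · have hk := h k
      rw [SETK, cK] at hk
      omega
    · have hl := h l
      rw [SETL, cL] at hl
      omega
    · intro j hjk hjl
      have hj := h j
      rwa [SETJ j hjk hjl] at hj
  · rintro ⟨h1, h2, h3⟩ j
    by_cases hjk : j = k
    · subst hjk
      rw [SETK, cK, h1]
      omega
    · by_cases hjl : j = l
      · subst hjl
        rw [SETL, cL]
        omega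
      · rw [SETJ j hjk hjl]
        exact h3 j hjk hjl



lemma double_sum_filter (p : Fin n → Prop) [DecidablePred p] (v : Fin n → Fin n → ℂ) :
    ∑ a : Fin n, ∑ b : Fin n, (if p a ∧ p b ∧ a ≠ b then v a b else 0)
      = ∑ a ∈ Finset.univ.filter p, ∑ b ∈ (Finset.univ.filter p).erase a, v a b := by
  classical
  have h1 : ∀ a : Fin n, (Finset.univ.filter p).erase a
      = Finset.univ.filter (fun b => p b ∧ a ≠ b) := by
    intro a
    ext x
    simp only [Finset.mem_erase, Finset.mem_filter, Finset.mem_univ, true_and]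
    constructor
    · rintro ⟨hxa, hx⟩; exact ⟨hx, hxa.symm⟩
    · rintro ⟨hx, hxa⟩; exact ⟨hxa.symm, hx⟩
  rw [Finset.sum_filter]
  refine Finset.sum_congr rfl fun a _ => ?_
  rw [h1 a, Finset.sum_filter]
  by_cases hpa : p a
  · rw [if_pos hpa]
    refine Finset.sum_congr rfl fun b _ => ?_
    by_cases hpb : p b
    · by_cases hab : a = b
      · rw [if_neg (by tauto), if_neg (by tauto)]
      · rw [if_pos ⟨hpa, hpb, hab⟩, if_pos ⟨hpb, hab⟩]
    · rw [if_neg (by tauto), if_neg (by tauto)]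
  · rw [if_neg hpa]
    refine Finset.sum_eq_zero fun b _ => ?_
    rw [if_neg (by tauto)]

lemma scalar_zero (lam : Fin m → ℕ) (z : Fin n → ℂ) (hz : Function.Injective z)
    (k l : Fin m) (hkl : k ≠ l) (hlamkl : lam k = lam l) (g : Fin n → Fin m) :
    ∑ a : Fin n, ∑ b : Fin n, (if g a = k ∧ g b = k ∧ a ≠ b then
      cD lam z (Function.update (Function.update g a l) b l) * z a * z b else 0) = 0 := by
  classical
  by_cases hCC : ((Finset.univ.filter fun x => g x = k).card = lam k + 2 ∧
       (Finset.univ.filter fun x => g x = l).card + 2 = lam l ∧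
       ∀ j, j ≠ k → j ≠ l → (Finset.univ.filter fun x => g x = j).card = lam j)
  · have hterm : ∀ a b : Fin n, (if g a = k ∧ g b = k ∧ a ≠ b then
        cD lam z (Function.update (Function.update g a l) b l) * z a * z b else 0)
        = if g a = k ∧ g b = k ∧ a ≠ b then
            -(∏ x : Fin n, ∏ y ∈ Finset.univ.filter (fun y => g x < g y), (z x - z y))⁻¹ *
            (z a * z b * ((z a - z b)^2 *
              ((∏ y ∈ Finset.univ.filter (fun y => g y = l), (z a - z y)) *
               (∏ y ∈ Finset.univ.filter (fun y => g y = l), (z b - z y)) *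
              (Lagrange.nodalWeight (Finset.univ.filter (fun x => g x = k)) z a *
               Lagrange.nodalWeight (Finset.univ.filter (fun x => g x = k)) z b)))) else 0 := by
      intro a b
      by_cases h : g a = k ∧ g b = k ∧ a ≠ b
      · obtain ⟨h1, h2, h3⟩ := h
        rw [if_pos ⟨h1, h2, h3⟩, if_pos ⟨h1, h2, h3⟩]
        have hcnd := (condeq lam k l hkl g a b h1 h2 h3).mpr hCC
        unfold cD
        rw [if_pos hcnd]
        unfold cc
        rw [coeff_formula z hz k l hkl g a b h3 h1 h2]
        ring
      · rw [if_neg h, if_neg h]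
    rw [Finset.sum_congr rfl fun a _ => Finset.sum_congr rfl fun b _ => hterm a b]
    rw [double_sum_filter (fun x => g x = k)]
    simp only [← Finset.mul_sum]
    rw [sum_pairs_eq_zero (Finset.univ.filter fun x => g x = k)
      (Finset.univ.filter fun x => g x = l) z hz (by omega), mul_zero]
  · refine Finset.sum_eq_zero fun a _ => Finset.sum_eq_zero fun b _ => ?_
    by_cases h : g a = k ∧ g b = k ∧ a ≠ b
    · obtain ⟨h1, h2, h3⟩ := h
      rw [if_pos ⟨h1, h2, h3⟩]
      have hcnd : ¬ (∀ j, (Finset.univ.filter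
          fun x => Function.update (Function.update g a l) b l x = j).card = lam j) :=
        fun hc => hCC ((condeq lam k l hkl g a b h1 h2 h3).mp hc)
      unfold cD
      rw [if_neg hcnd, zero_mul, zero_mul]
    · rw [if_neg h]



open Classical in
def T1 (lam : Fin m → ℕ) (z : Fin n → ℂ) (k l : Fin m)
    (t : (Fin n → Fin m) × Fin n × Fin n) : MvPolynomial (Fin m × Fin n) ℂ :=
  if t.1 t.2.1 = l ∧ t.1 t.2.2 = l ∧ t.2.1 ≠ t.2.2 then
    monomial (expo (Function.update (Function.update t.1 t.2.1 k) t.2.2 k))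
      (cD lam z t.1 * z t.2.1 * z t.2.2)
  else 0

open Classical in
def T2 (lam : Fin m → ℕ) (z : Fin n → ℂ) (k l : Fin m)
    (t : (Fin n → Fin m) × Fin n × Fin n) : MvPolynomial (Fin m × Fin n) ℂ :=
  if t.1 t.2.1 = k ∧ t.1 t.2.2 = k ∧ t.2.1 ≠ t.2.2 then
    monomial (expo t.1)
      (cD lam z (Function.update (Function.update t.1 t.2.1 l) t.2.2 l) * z t.2.1 * z t.2.2)
  else 0

lemma term_eq (lam : Fin m → ℕ) (z : Fin n → ℂ) (k l : Fin m) (hkl : k ≠ l)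
    (f : Fin n → Fin m) (a b : Fin n) (u : (Fin m × Fin n) →₀ ℕ)
    (hu : u = expo f - Finsupp.single (l,a) 1 + Finsupp.single (k,a) 1) :
    monomial (u - Finsupp.single (l,b) 1 + Finsupp.single (k,b) 1)
      ((cD lam z f * z a * ((expo f) (l,a) : ℂ)) * z b * (u (l,b) : ℂ))
    = T1 lam z k l (f, a, b) := by
  unfold T1
  by_cases h1 : f a = l
  · have e1 : (expo f) (l,a) = 1 := by rw [expo_apply, if_pos h1]
    have hu2 : u = expo (Function.update f a k) :=
      hu.trans (expo_update f a k l h1)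
    by_cases h2 : f b = l ∧ a ≠ b
    · obtain ⟨h2', h3⟩ := h2
      have hfb : Function.update f a k b = l := by
        rw [Function.update_of_ne (Ne.symm h3), h2']
      rw [hu2, e1, expo_update (Function.update f a k) b k l hfb, expo_apply, if_pos hfb,
        if_pos (show f a = l ∧ f b = l ∧ a ≠ b from ⟨h1, h2', h3⟩)]
      norm_num
    · have hfb0 : expo (Function.update f a k) (l, b) = 0 := by
        rw [expo_apply, if_neg]
        intro hc
        by_cases hba : b = a
        · rw [hba, Function.update_self] at hc; exact hkl hc
        · rw [Function.update_of_ne hba] at hc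
          exact h2 ⟨hc, fun h => hba h.symm⟩
      rw [hu2, hfb0, if_neg (by tauto)]
      simp
  · have e1 : (expo f) (l,a) = 0 := by rw [expo_apply, if_neg h1]
    rw [e1, if_neg (by tauto)]
    simp

lemma update_back (f : Fin n → Fin m) (a b : Fin n) (c d : Fin m) (hab : a ≠ b)
    (hfa : f a = c) (hfb : f b = c) :
    Function.update (Function.update (Function.update (Function.update f a d) b d) a c) b c
      = f := by
  funext x
  by_cases hxb : x = b
  · subst hxb; rw [Function.update_self, hfb]
  · rw [Function.update_of_ne hxb]
    by_cases hxa : x = a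
    · subst hxa; rw [Function.update_self, hfa]
    · rw [Function.update_of_ne hxa, Function.update_of_ne hxb, Function.update_of_ne hxa]

lemma upd2_eval1 (f : Fin n → Fin m) (a b : Fin n) (d : Fin m) (hab : a ≠ b) :
    Function.update (Function.update f a d) b d a = d := by
  rw [Function.update_of_ne hab, Function.update_self]

lemma upd2_eval2 (f : Fin n → Fin m) (a b : Fin n) (d : Fin m) :
    Function.update (Function.update f a d) b d b = d := Function.update_self _ _ _



end EzklAux
end

open EzklAux

/-- With `P_z(λ)` as in the paper, if `λ k = λ l` (for distinct indices `k, l`), then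
`(e^z_{k,l})² P_z(λ) = 0`, where `e^z_{k,l} = ∑_a z_a y_a^{(k)} ∂/∂y_a^{(l)}`.
Here `X (j, a)` stands for `y_a^{(j)}`. -/
theorem ezkl_sq_annihilates_P
    (m n : ℕ) (lam : Fin m → ℕ) (hlam : Antitone lam) (hn : n = ∑ j, lam j)
    (z : Fin n → ℂ) (hz : Function.Injective z)
    (k l : Fin m) (hne : k ≠ l) (hlamkl : lam k = lam l)
    (E : MvPolynomial (Fin m × Fin n) ℂ → MvPolynomial (Fin m × Fin n) ℂ)
    (hE : ∀ q, E q = ∑ a : Fin n, C (z a) * X (k, a) * pderiv (l, a) q)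
    (P : MvPolynomial (Fin m × Fin n) ℂ)
    (hP : P = ∑ f ∈ Finset.univ.filter
        (fun f : Fin n → Fin m => ∀ j, (Finset.univ.filter fun a => f a = j).card = lam j),
      C ((∏ a : Fin n, ∏ b ∈ Finset.univ.filter (fun b => f a < f b), (z a - z b))⁻¹) *
        ∏ a : Fin n, X (f a, a)) :
    E (E P) = 0 := by
  classical
  have hP' : P = ∑ f : Fin n → Fin m, C (cD lam z f) * monomial (expo f) 1 := by
    rw [hP, Finset.sum_filter]
    refine Finset.sum_congr rfl fun f _ => ?_
    rw [prod_X_eq]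
    by_cases h : ∀ j, (Finset.univ.filter fun a => f a = j).card = lam j
    · rw [if_pos h]
      unfold cD cc
      rw [if_pos h]
    · rw [if_neg h]
      unfold cD
      rw [if_neg h, map_zero, zero_mul]
  have hEP : E P = ∑ f : Fin n → Fin m, ∑ a : Fin n,
      monomial (expo f - Finsupp.single (l,a) 1 + Finsupp.single (k,a) 1)
        (cD lam z f * z a * ((expo f) (l,a) : ℂ)) := by
    rw [hE, hP']
    rw [show (∑ a : Fin n, C (z a) * X (k, a) * pderiv (l, a)
        (∑ f : Fin n → Fin m, C (cD lam z f) * monomial (expo f) 1))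
      = ∑ a : Fin n, ∑ f : Fin n → Fin m,
          monomial (expo f - Finsupp.single (l,a) 1 + Finsupp.single (k,a) 1)
            (cD lam z f * z a * ((expo f) (l,a) : ℂ)) from
      Finset.sum_congr rfl fun a _ => by
        rw [map_sum, Finset.mul_sum]
        exact Finset.sum_congr rfl fun f _ =>
          mul_X_pderiv_monomial (z a) (cD lam z f) (k,a) (l,a) (expo f)]
    exact Finset.sum_comm
  have hEEP : E (E P) = ∑ f : Fin n → Fin m, ∑ a : Fin n, ∑ b : Fin n,
      T1 lam z k l (f, a, b) := by
    rw [hE, hEP]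
    rw [show (∑ b : Fin n, C (z b) * X (k, b) * pderiv (l, b)
        (∑ f : Fin n → Fin m, ∑ a : Fin n,
          monomial (expo f - Finsupp.single (l,a) 1 + Finsupp.single (k,a) 1)
            (cD lam z f * z a * ((expo f) (l,a) : ℂ))))
      = ∑ b : Fin n, ∑ f : Fin n → Fin m, ∑ a : Fin n, T1 lam z k l (f, a, b) from
      Finset.sum_congr rfl fun b _ => by
        rw [map_sum, Finset.mul_sum]
        refine Finset.sum_congr rfl fun f _ => ?_
        rw [map_sum, Finset.mul_sum]
        refine Finset.sum_congr rfl fun a _ => ?_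
        rw [mul_X_pderiv_monomial' (z b) _ (k,b) (l,b) _]
        exact term_eq lam z k l hne f a b _ rfl]
    rw [Finset.sum_comm]
    exact Finset.sum_congr rfl fun f _ => Finset.sum_comm
  rw [hEEP]
  -- convert to a sum over triples
  have htriple : (∑ f : Fin n → Fin m, ∑ a : Fin n, ∑ b : Fin n, T1 lam z k l (f, a, b))
      = ∑ t ∈ (Finset.univ ×ˢ Finset.univ ×ˢ Finset.univ :
          Finset ((Fin n → Fin m) × Fin n × Fin n)), T1 lam z k l t := by
    rw [Finset.sum_product]
    exact Finset.sum_congr rfl fun f _ => by rw [Finset.sum_product]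
  rw [htriple]
  have hS1 : ∑ t ∈ (Finset.univ ×ˢ Finset.univ ×ˢ Finset.univ :
        Finset ((Fin n → Fin m) × Fin n × Fin n)), T1 lam z k l t
      = ∑ t ∈ (Finset.univ ×ˢ Finset.univ ×ˢ Finset.univ :
          Finset ((Fin n → Fin m) × Fin n × Fin n)).filter
          (fun t => t.1 t.2.1 = l ∧ t.1 t.2.2 = l ∧ t.2.1 ≠ t.2.2), T1 lam z k l t := by
    refine (Finset.sum_filter_of_ne fun t _ h => ?_).symm
    by_contra hp
    exact h (by unfold T1; rw [if_neg hp])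
  rw [hS1]
  have hbij : ∑ t ∈ (Finset.univ ×ˢ Finset.univ ×ˢ Finset.univ :
          Finset ((Fin n → Fin m) × Fin n × Fin n)).filter
          (fun t => t.1 t.2.1 = l ∧ t.1 t.2.2 = l ∧ t.2.1 ≠ t.2.2), T1 lam z k l t
      = ∑ t ∈ (Finset.univ ×ˢ Finset.univ ×ˢ Finset.univ :
          Finset ((Fin n → Fin m) × Fin n × Fin n)).filter
          (fun t => t.1 t.2.1 = k ∧ t.1 t.2.2 = k ∧ t.2.1 ≠ t.2.2), T2 lam z k l t := by
    refine Finset.sum_nbij'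
      (fun t => (Function.update (Function.update t.1 t.2.1 k) t.2.2 k, t.2.1, t.2.2))
      (fun t => (Function.update (Function.update t.1 t.2.1 l) t.2.2 l, t.2.1, t.2.2))
      ?_ ?_ ?_ ?_ ?_
    · intro t ht
      obtain ⟨_, h1, h2, h3⟩ := Finset.mem_filter.mp ht
      refine Finset.mem_filter.mpr ⟨by simp, ?_, ?_, h3⟩
      · exact upd2_eval1 t.1 t.2.1 t.2.2 k h3
      · exact upd2_eval2 t.1 t.2.1 t.2.2 k
    · intro t ht
      obtain ⟨_, h1, h2, h3⟩ := Finset.mem_filter.mp ht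
      refine Finset.mem_filter.mpr ⟨by simp, ?_, ?_, h3⟩
      · exact upd2_eval1 t.1 t.2.1 t.2.2 l h3
      · exact upd2_eval2 t.1 t.2.1 t.2.2 l
    · intro t ht
      obtain ⟨_, h1, h2, h3⟩ := Finset.mem_filter.mp ht
      have := update_back t.1 t.2.1 t.2.2 l k h3 h1 h2
      exact Prod.ext (by simpa using this) rfl
    · intro t ht
      obtain ⟨_, h1, h2, h3⟩ := Finset.mem_filter.mp ht
      have := update_back t.1 t.2.1 t.2.2 k l h3 h1 h2
      exact Prod.ext (by simpa using this) rfl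
    · intro t ht
      obtain ⟨_, h1, h2, h3⟩ := Finset.mem_filter.mp ht
      unfold T1 T2
      rw [if_pos ⟨h1, h2, h3⟩,
        if_pos (show _ ∧ _ ∧ _ from
          ⟨upd2_eval1 t.1 t.2.1 t.2.2 k h3, upd2_eval2 t.1 t.2.1 t.2.2 k, h3⟩)]
      have := update_back t.1 t.2.1 t.2.2 l k h3 h1 h2
      simp only [this]
  rw [hbij]
  have hS2 : ∑ t ∈ (Finset.univ ×ˢ Finset.univ ×ˢ Finset.univ :
          Finset ((Fin n → Fin m) × Fin n × Fin n)).filter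
          (fun t => t.1 t.2.1 = k ∧ t.1 t.2.2 = k ∧ t.2.1 ≠ t.2.2), T2 lam z k l t
      = ∑ t ∈ (Finset.univ ×ˢ Finset.univ ×ˢ Finset.univ :
          Finset ((Fin n → Fin m) × Fin n × Fin n)), T2 lam z k l t :=
    Finset.sum_filter_of_ne fun t _ h => by
      by_contra hp
      exact h (by unfold T2; rw [if_neg hp])
  rw [hS2]
  have huntriple : (∑ t ∈ (Finset.univ ×ˢ Finset.univ ×ˢ Finset.univ :
          Finset ((Fin n → Fin m) × Fin n × Fin n)), T2 lam z k l t)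
      = ∑ g : Fin n → Fin m, ∑ a : Fin n, ∑ b : Fin n, T2 lam z k l (g, a, b) := by
    rw [Finset.sum_product]
    exact Finset.sum_congr rfl fun f _ => by rw [Finset.sum_product]
  rw [huntriple]
  refine Finset.sum_eq_zero fun g _ => ?_
  have hT2 : ∀ a b : Fin n, T2 lam z k l (g, a, b)
      = monomial (expo g) (if g a = k ∧ g b = k ∧ a ≠ b then
          cD lam z (Function.update (Function.update g a l) b l) * z a * z b else 0) := by
    intro a b
    unfold T2
    split_ifs with h
    · rfl
    · rw [map_zero]
  calc ∑ a : Fin n, ∑ b : Fin n, T2 lam z k l (g, a, b)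
      = ∑ a : Fin n, monomial (expo g) (∑ b : Fin n,
          if g a = k ∧ g b = k ∧ a ≠ b then
            cD lam z (Function.update (Function.update g a l) b l) * z a * z b else 0) := by
        refine Finset.sum_congr rfl fun a _ => ?_
        rw [show (∑ b : Fin n, T2 lam z k l (g, a, b)) = ∑ b : Fin n,
          monomial (expo g) (if g a = k ∧ g b = k ∧ a ≠ b then
            cD lam z (Function.update (Function.update g a l) b l) * z a * z b else 0) from
          Finset.sum_congr rfl fun b _ => hT2 a b]
        exact (map_sum _ _ _).symm
    _ = monomial (expo g) (∑ a : Fin n, ∑ b : Fin n,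
          if g a = k ∧ g b = k ∧ a ≠ b then
            cD lam z (Function.update (Function.update g a l) b l) * z a * z b else 0) :=
        (map_sum _ _ _).symm
    _ = 0 := by
        rw [scalar_zero lam z hz k l hne hlamkl g, map_zero]
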